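/- Let k be a field, R = k[x,y,z] with 𝔪 = (x,y,z), let d ≥ 2 and d' ≥ 2 be integers, and let I' ⊆ R be the ideal generated by the monomials z^{d'}·x^{i·d'}·y^{(d−1−i)·d'} for 0 ≤ i ≤ d−1, x^{(2+j)·d'}·y^{(d−2−j)·d'} for 0 ≤ j ≤ d−2, y^{d·d'}, and z^{d·d'} (the images under x ↦ x^{d'}, y ↦ y^{d'}, z ↦ z^{d'} of the generators z·x^i·y^{d−1−i}, x^{2+j}·y^{d−2−j}, y^d, z^d). Then I' is 𝔪-primary, and for every integer t ≥ 0 one has dim_k Soc(R/I')_t = (d−2)·[t = dd'+2d'−3] + 1·[t = dd'+3d'−3] + (d−1)·[t = 2dd'−3], where [·] equals 1 if the condition holds and 0 otherwise and the contributions are added when the listed degrees coincide. -/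

import Mathlib

open MvPolynomial

/-- The maximal graded ideal `𝔪 = (x, y, z)` of `k[x,y,z]`. -/
noncomputable def mIdeal (k : Type*) [Field k] : Ideal (MvPolynomial (Fin 3) k) :=
  Ideal.span (Set.range (X : Fin 3 → MvPolynomial (Fin 3) k))

/-- `dim_k Soc(R/I)_t`, the dimension of the degree-`t` component of the socle
`(I : 𝔪)/I` of `R/I`. -/
noncomputable def socDimAt {k : Type*} [Field k] (I : Ideal (MvPolynomial (Fin 3) k))
    (t : ℕ) : ℕ :=
  Module.finrank k
    ↥(Submodule.map (Ideal.Quotient.mkₐ k I).toLinearMap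
      ((Submodule.colon I (mIdeal k)).restrictScalars k ⊓ homogeneousSubmodule (Fin 3) k t))

/-! ### Auxiliary combinatorial definitions and lemmas -/

noncomputable def mexp (a b c : ℕ) : Fin 3 →₀ ℕ :=
  Finsupp.single 0 a + Finsupp.single 1 b + Finsupp.single 2 c

lemma mexp_apply0 (a b c : ℕ) : mexp a b c 0 = a := by simp [mexp]
lemma mexp_apply1 (a b c : ℕ) : mexp a b c 1 = b := by simp [mexp]
lemma mexp_apply2 (a b c : ℕ) : mexp a b c 2 = c := by simp [mexp]

lemma degree_eq3 (s : Fin 3 →₀ ℕ) : s.degree = s 0 + s 1 + s 2 := by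
  rw [Finsupp.degree_apply, Finset.sum_subset (Finset.subset_univ s.support)
    (fun i _ hi => by simpa using Finsupp.notMem_support_iff.mp hi),
    Fin.sum_univ_three]

lemma mexp_degree (a b c : ℕ) : (mexp a b c).degree = a + b + c := by
  simp [degree_eq3, mexp]

lemma eq_mexp (s : Fin 3 →₀ ℕ) : s = mexp (s 0) (s 1) (s 2) := by
  ext i; fin_cases i <;> simp [mexp]

lemma mexp_le_iff (a b c : ℕ) (s : Fin 3 →₀ ℕ) :
    mexp a b c ≤ s ↔ a ≤ s 0 ∧ b ≤ s 1 ∧ c ≤ s 2 := by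
  rw [Finsupp.le_def]
  constructor
  · intro h
    exact ⟨by simpa [mexp] using h 0, by simpa [mexp] using h 1, by simpa [mexp] using h 2⟩
  · rintro ⟨h0, h1, h2⟩ i; fin_cases i <;> simpa [mexp]

lemma mexp_inj {a b c a' b' c' : ℕ} (h : mexp a b c = mexp a' b' c') :
    a = a' ∧ b = b' ∧ c = c' := by
  refine ⟨?_, ?_, ?_⟩
  · have := congrArg (fun s => s 0) h; simpa [mexp] using this
  · have := congrArg (fun s => s 1) h; simpa [mexp] using this
  · have := congrArg (fun s => s 2) h; simpa [mexp] using this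

lemma mexp_add_single0 (a b c : ℕ) :
    mexp a b c + Finsupp.single 0 1 = mexp (a+1) b c := by
  ext i; fin_cases i <;> simp [mexp]

lemma mexp_add_single1 (a b c : ℕ) :
    mexp a b c + Finsupp.single 1 1 = mexp a (b+1) c := by
  ext i; fin_cases i <;> simp [mexp]

lemma mexp_add_single2 (a b c : ℕ) :
    mexp a b c + Finsupp.single 2 1 = mexp a b (c+1) := by
  ext i; fin_cases i <;> simp [mexp]

/-- The base staircase predicate for the ideal `(z(x,y)^{d-1}, x²(x,y)^{d-2}, y^d, z^d)`. -/
def PP (d A B C : ℕ) : Prop :=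
  (1 ≤ C ∧ d ≤ A + B + 1) ∨ (2 ≤ A ∧ d ≤ A + B) ∨ d ≤ B ∨ d ≤ C

/-- The exponents of the generators of `I'`. -/
def Sgen (d d' : ℕ) : Set (Fin 3 →₀ ℕ) :=
  {s | ∃ i ≤ d - 1, s = mexp (i * d') ((d - 1 - i) * d') d'} ∪
  {s | ∃ j ≤ d - 2, s = mexp ((2 + j) * d') ((d - 2 - j) * d') 0} ∪
  {mexp 0 (d * d') 0, mexp 0 0 (d * d')}

/-- The staircase membership predicate of the monomial ideal `I'`. -/
def Stair (d d' : ℕ) (s : Fin 3 →₀ ℕ) : Prop := ∃ g ∈ Sgen d d', g ≤ s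

lemma stair_iff {d d' : ℕ} (hd' : 0 < d') (s : Fin 3 →₀ ℕ) :
    Stair d d' s ↔ PP d (s 0 / d') (s 1 / d') (s 2 / d') := by
  have hdiv : ∀ i a : ℕ, i ≤ a / d' ↔ i * d' ≤ a := fun i a => Nat.le_div_iff_mul_le hd'
  obtain ⟨A, hA⟩ : ∃ A, A = s 0 / d' := ⟨_, rfl⟩
  obtain ⟨B, hB⟩ : ∃ B, B = s 1 / d' := ⟨_, rfl⟩
  obtain ⟨C, hC⟩ : ∃ C, C = s 2 / d' := ⟨_, rfl⟩
  rw [← hA, ← hB, ← hC]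
  have hdivA : ∀ i, i ≤ A ↔ i * d' ≤ s 0 := fun i => by rw [hA]; exact hdiv i _
  have hdivB : ∀ i, i ≤ B ↔ i * d' ≤ s 1 := fun i => by rw [hB]; exact hdiv i _
  have hdivC : ∀ i, i ≤ C ↔ i * d' ≤ s 2 := fun i => by rw [hC]; exact hdiv i _
  clear hA hB hC hdiv
  constructor
  · rintro ⟨g, hg, hle⟩
    rcases hg with ((⟨i, hi, rfl⟩ | ⟨j, hj, rfl⟩) | rfl | hg)
    · rw [mexp_le_iff] at hle
      obtain ⟨h0, h1, h2⟩ := hle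
      rw [← hdivA] at h0
      rw [← hdivB] at h1
      have h2' : 1 ≤ C := (hdivC 1).mpr (by simpa using h2)
      left; omega
    · rw [mexp_le_iff] at hle
      obtain ⟨h0, h1, -⟩ := hle
      rw [← hdivA] at h0
      rw [← hdivB] at h1
      right; left; omega
    · rw [mexp_le_iff] at hle
      right; right; left; exact (hdivB d).mpr hle.2.1
    · rw [Set.mem_singleton_iff] at hg; subst hg
      rw [mexp_le_iff] at hle
      right; right; right; exact (hdivC d).mpr hle.2.2
  · rintro (⟨hC1, hAB⟩ | ⟨hA1, hAB⟩ | hB1 | hC1)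
    · refine ⟨mexp (min A (d-1) * d') ((d - 1 - min A (d-1)) * d') d',
        Or.inl (Or.inl ⟨_, min_le_right _ _, rfl⟩), ?_⟩
      rw [mexp_le_iff]
      refine ⟨(hdivA _).mp (min_le_left _ _), (hdivB _).mp (by omega), ?_⟩
      simpa using (hdivC 1).mp hC1
    · refine ⟨mexp ((2 + min (A - 2) (d-2)) * d') ((d - 2 - min (A - 2) (d-2)) * d') 0,
        Or.inl (Or.inr ⟨_, min_le_right _ _, rfl⟩), ?_⟩
      rw [mexp_le_iff]
      exact ⟨(hdivA _).mp (by omega), (hdivB _).mp (by omega), Nat.zero_le _⟩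
    · exact ⟨mexp 0 (d * d') 0, Or.inr (Set.mem_insert _ _),
        (mexp_le_iff _ _ _ _).mpr ⟨Nat.zero_le _, (hdivB d).mp hB1, Nat.zero_le _⟩⟩
    · exact ⟨mexp 0 0 (d * d'), Or.inr (Set.mem_insert_iff.mpr (Or.inr rfl)),
        (mexp_le_iff _ _ _ _).mpr ⟨Nat.zero_le _, Nat.zero_le _, (hdivC d).mp hC1⟩⟩

/-- Socle predicate: `s` is not in the staircase, but all its shifts are. -/
def SocP (d d' : ℕ) (s : Fin 3 →₀ ℕ) : Prop :=
  ¬ Stair d d' s ∧ ∀ i : Fin 3, Stair d d' (s + Finsupp.single i 1)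

/-- The explicit finite set of socle exponents. -/
noncomputable def SocF (d d' : ℕ) : Finset (Fin 3 →₀ ℕ) :=
  ((Finset.range (d-1)).image fun a => mexp ((a+1)*d'-1) ((d-1-a)*d'-1) (d*d'-1))
  ∪ {mexp (2*d'-1) (d*d'-1) (d'-1)}
  ∪ ((Finset.range (d-2)).image fun j => mexp ((j+3)*d'-1) ((d-2-j)*d'-1) (d'-1))

lemma mydiv {d' : ℕ} (hd' : 0 < d') (a : ℕ) : ((a+1) * d' - 1) / d' = a := by
  have h : (a+1) * d' - 1 = (d' - 1) + a * d' := by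
    have : (a+1) * d' = a * d' + d' := by ring
    omega
  rw [h, Nat.add_mul_div_right _ _ hd', Nat.div_eq_of_lt (by omega)]
  omega

lemma pos_mul {a d' : ℕ} (hd' : 0 < d') : 1 ≤ (a+1) * d' :=
  Nat.one_le_iff_ne_zero.mpr (Nat.mul_ne_zero (by omega) (by omega))

lemma mydiv_succ {d' : ℕ} (hd' : 0 < d') (a : ℕ) : ((a+1) * d' - 1 + 1) / d' = a + 1 := by
  have h1 : (a+1) * d' - 1 + 1 = (a+1) * d' := by
    have := pos_mul (a := a) hd'; omega
  rw [h1, Nat.mul_div_cancel _ hd']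

/-- Forward: from the arithmetic data, the monomial is a socle exponent. -/
lemma socP_of {d d' : ℕ} (hd' : 0 < d') (A B C : ℕ)
    (h : ¬ PP d A B C) (hx : PP d (A+1) B C) (hy : PP d A (B+1) C) (hz : PP d A B (C+1)) :
    SocP d d' (mexp ((A+1)*d'-1) ((B+1)*d'-1) ((C+1)*d'-1)) := by
  have e0 := mydiv hd' A
  have e1 := mydiv hd' B
  have e2 := mydiv hd' C
  constructor
  · rw [stair_iff hd', mexp_apply0, mexp_apply1, mexp_apply2, e0, e1, e2]
    exact h
  · intro i
    fin_cases i
    · show Stair d d' (mexp ((A+1)*d'-1) ((B+1)*d'-1) ((C+1)*d'-1) + Finsupp.single 0 1)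
      rw [mexp_add_single0, stair_iff hd', mexp_apply0, mexp_apply1, mexp_apply2,
        mydiv_succ hd', e1, e2]
      exact hx
    · show Stair d d' (mexp ((A+1)*d'-1) ((B+1)*d'-1) ((C+1)*d'-1) + Finsupp.single 1 1)
      rw [mexp_add_single1, stair_iff hd', mexp_apply0, mexp_apply1, mexp_apply2,
        mydiv_succ hd', e0, e2]
      exact hy
    · show Stair d d' (mexp ((A+1)*d'-1) ((B+1)*d'-1) ((C+1)*d'-1) + Finsupp.single 2 1)
      rw [mexp_add_single2, stair_iff hd', mexp_apply0, mexp_apply1, mexp_apply2,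
        mydiv_succ hd', e0, e1]
      exact hz

/-- Backward: any socle exponent has the canonical form. -/
lemma socP_elim {d d' : ℕ} (hd' : 0 < d') {s : Fin 3 →₀ ℕ} (h : SocP d d' s) :
    ∃ A B C : ℕ, s = mexp ((A+1)*d'-1) ((B+1)*d'-1) ((C+1)*d'-1) ∧
      ¬ PP d A B C ∧ PP d (A+1) B C ∧ PP d A (B+1) C ∧ PP d A B (C+1) := by
  obtain ⟨hns, hall⟩ := h
  rw [stair_iff hd'] at hns
  have key : ∀ v : ℕ, v / d' ≠ (v+1) / d' → ((v+1) / d' = v / d' + 1 ∧ v + 1 = (v/d' + 1) * d') := by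
    intro v hne
    have h1 : v / d' ≤ (v+1) / d' := Nat.div_le_div_right (by omega)
    have h2 : (v+1) / d' ≤ v / d' + 1 := by
      have h' : (v+1) / d' ≤ (v + d') / d' := Nat.div_le_div_right (by omega)
      rwa [Nat.add_div_right _ hd'] at h'
    have h3 : (v+1)/d' = v/d' + 1 := by omega
    have h4 : (v/d' + 1) * d' ≤ v + 1 := (Nat.le_div_iff_mul_le hd').mp (le_of_eq h3.symm)
    have h5 : v < (v/d' + 1) * d' := (Nat.div_lt_iff_lt_mul hd').mp (Nat.lt_succ_self _)
    exact ⟨h3, by omega⟩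
  have hx := hall 0
  rw [show s + Finsupp.single 0 1 = mexp (s 0 + 1) (s 1) (s 2) by
        rw [eq_mexp s, mexp_add_single0, mexp_apply0, mexp_apply1, mexp_apply2],
      stair_iff hd', mexp_apply0, mexp_apply1, mexp_apply2] at hx
  have hy := hall 1
  rw [show s + Finsupp.single 1 1 = mexp (s 0) (s 1 + 1) (s 2) by
        rw [eq_mexp s, mexp_add_single1, mexp_apply0, mexp_apply1, mexp_apply2],
      stair_iff hd', mexp_apply0, mexp_apply1, mexp_apply2] at hy
  have hz := hall 2
  rw [show s + Finsupp.single 2 1 = mexp (s 0) (s 1) (s 2 + 1) by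
        rw [eq_mexp s, mexp_add_single2, mexp_apply0, mexp_apply1, mexp_apply2],
      stair_iff hd', mexp_apply0, mexp_apply1, mexp_apply2] at hz
  have hne0 : s 0 / d' ≠ (s 0 + 1) / d' := fun heq => hns (by rwa [← heq] at hx)
  have hne1 : s 1 / d' ≠ (s 1 + 1) / d' := fun heq => hns (by rwa [← heq] at hy)
  have hne2 : s 2 / d' ≠ (s 2 + 1) / d' := fun heq => hns (by rwa [← heq] at hz)
  obtain ⟨k0, m0⟩ := key _ hne0
  obtain ⟨k1, m1⟩ := key _ hne1
  obtain ⟨k2, m2⟩ := key _ hne2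
  refine ⟨s 0 / d', s 1 / d', s 2 / d', ?_, hns, by rwa [k0] at hx, by rwa [k1] at hy,
    by rwa [k2] at hz⟩
  rw [← m0, ← m1, ← m2]
  simp only [Nat.add_sub_cancel]
  exact eq_mexp s

lemma socP_iff {d d' : ℕ} (hd : 2 ≤ d) (hd' : 2 ≤ d') (s : Fin 3 →₀ ℕ) :
    SocP d d' s ↔ s ∈ SocF d d' := by
  have hd'0 : 0 < d' := by omega
  constructor
  · intro h
    obtain ⟨A, B, C, rfl, h0, h1, h2, h3⟩ := socP_elim hd'0 h
    have key : (C = d-1 ∧ A + B = d-2 ∧ A ≤ d-2) ∨ (A = 1 ∧ B = d-1 ∧ C = 0) ∨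
        (2 ≤ A ∧ A ≤ d-1 ∧ A + B = d-1 ∧ C = 0) := by
      unfold PP at h0 h1 h2 h3
      omega
    unfold SocF
    rcases key with ⟨hC, hAB, hA⟩ | ⟨hA, hB, hC⟩ | ⟨hA1, hA2, hAB, hC⟩
    · apply Finset.mem_union_left; apply Finset.mem_union_left
      refine Finset.mem_image.mpr ⟨A, Finset.mem_range.mpr (by omega), ?_⟩
      rw [show d - 1 - A = B + 1 by omega, show d = C + 1 by omega]
    · apply Finset.mem_union_left; apply Finset.mem_union_right
      rw [Finset.mem_singleton, hA, hB, hC]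
      rw [show (1+1) * d' = 2 * d' by norm_num, show d - 1 + 1 = d by omega,
        show (0+1) * d' = d' by norm_num]
    · apply Finset.mem_union_right
      refine Finset.mem_image.mpr ⟨A - 2, Finset.mem_range.mpr (by omega), ?_⟩
      rw [show A - 2 + 3 = A + 1 by omega, show d - 2 - (A - 2) = B + 1 by omega, hC,
        show (0+1) * d' = d' by norm_num]
  · intro h
    unfold SocF at h
    rcases Finset.mem_union.mp h with h' | h'
    · rcases Finset.mem_union.mp h' with h'' | h''
      · obtain ⟨a, ha, rfl⟩ := Finset.mem_image.mp h''
        rw [Finset.mem_range] at ha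
        have H := socP_of (d := d) (d' := d') hd'0 a (d-2-a) (d-1)
          (by unfold PP; omega) (by unfold PP; omega) (by unfold PP; omega) (by unfold PP; omega)
        rw [show d - 2 - a + 1 = d - 1 - a by omega, show d - 1 + 1 = d by omega] at H
        exact H
      · rw [Finset.mem_singleton] at h''
        subst h''
        have H := socP_of (d := d) (d' := d') hd'0 1 (d-1) 0
          (by unfold PP; omega) (by unfold PP; omega) (by unfold PP; omega) (by unfold PP; omega)
        rw [show (1+1) * d' = 2 * d' by norm_num, show d - 1 + 1 = d by omega,
          show (0+1) * d' = d' by norm_num] at H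
        exact H
    · obtain ⟨j, hj, rfl⟩ := Finset.mem_image.mp h'
      rw [Finset.mem_range] at hj
      have H := socP_of (d := d) (d' := d') hd'0 (j+2) (d-3-j) 0
        (by unfold PP; omega) (by unfold PP; omega) (by unfold PP; omega) (by unfold PP; omega)
      rw [show j + 2 + 1 = j + 3 by omega, show d - 3 - j + 1 = d - 2 - j by omega,
        show (0+1) * d' = d' by norm_num] at H
      exact H

lemma deg3 {x y z w : ℕ} (h : x + y + z = w) (h1 : 1 ≤ x) (h2 : 1 ≤ y) (h3 : 1 ≤ z) :
    (x-1) + (y-1) + (z-1) = w - 3 := by omega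

lemma genset_eq {k : Type*} [Field k] (d d' : ℕ) :
    ({p | ∃ i ≤ d - 1, p = X 2 ^ d' * X 0 ^ (i * d') * X 1 ^ ((d - 1 - i) * d')} ∪
       {p | ∃ j ≤ d - 2, p = X 0 ^ ((2 + j) * d') * X 1 ^ ((d - 2 - j) * d')} ∪
       {X 1 ^ (d * d'), X 2 ^ (d * d')} : Set (MvPolynomial (Fin 3) k)) =
    (fun s => monomial s (1 : k)) '' Sgen d d' := by
  have hm1 : ∀ a b : ℕ, (X 2 ^ d' * X 0 ^ a * X 1 ^ b : MvPolynomial (Fin 3) k)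
      = monomial (mexp a b d') 1 := by
    intro a b
    rw [mexp]
    simp only [X_pow_eq_monomial, monomial_mul, one_mul]
    congr 1
    abel
  have hm2 : ∀ a b : ℕ, (X 0 ^ a * X 1 ^ b : MvPolynomial (Fin 3) k)
      = monomial (mexp a b 0) 1 := by
    intro a b
    rw [mexp]
    simp only [X_pow_eq_monomial, monomial_mul, one_mul, Finsupp.single_zero, add_zero]
  have hm3 : ∀ n : ℕ, (X 1 ^ n : MvPolynomial (Fin 3) k) = monomial (mexp 0 n 0) 1 := by
    intro n; rw [mexp]; simp [X_pow_eq_monomial]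
  have hm4 : ∀ n : ℕ, (X 2 ^ n : MvPolynomial (Fin 3) k) = monomial (mexp 0 0 n) 1 := by
    intro n; rw [mexp]; simp [X_pow_eq_monomial]
  ext p
  constructor
  · rintro ((⟨i, hi, rfl⟩ | ⟨j, hj, rfl⟩) | rfl | hp)
    · exact ⟨_, Or.inl (Or.inl ⟨i, hi, rfl⟩), (hm1 _ _).symm⟩
    · exact ⟨_, Or.inl (Or.inr ⟨j, hj, rfl⟩), (hm2 _ _).symm⟩
    · exact ⟨_, Or.inr (Set.mem_insert _ _), (hm3 _).symm⟩
    · rw [Set.mem_singleton_iff] at hp; subst hp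
      exact ⟨_, Or.inr (Set.mem_insert_iff.mpr (Or.inr rfl)), (hm4 _).symm⟩
  · rintro ⟨s, hs, rfl⟩
    rcases hs with ((⟨i, hi, rfl⟩ | ⟨j, hj, rfl⟩) | rfl | hs)
    · exact Or.inl (Or.inl ⟨i, hi, (hm1 _ _).symm⟩)
    · exact Or.inl (Or.inr ⟨j, hj, (hm2 _ _).symm⟩)
    · exact Or.inr (Set.mem_insert_iff.mpr (Or.inl (hm3 _).symm))
    · rw [Set.mem_singleton_iff] at hs; subst hs
      exact Or.inr (Set.mem_insert_iff.mpr (Or.inr (hm4 _).symm))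

lemma X_eq_mono {k : Type*} [Field k] (i : Fin 3) :
    (X i : MvPolynomial (Fin 3) k) = monomial (Finsupp.single i 1) 1 := by
  rw [← pow_one (X i), X_pow_eq_monomial]

lemma mem_colon_iff {k : Type*} [Field k] (I : Ideal (MvPolynomial (Fin 3) k))
    (p : MvPolynomial (Fin 3) k) :
    p ∈ Submodule.colon I (mIdeal k) ↔ ∀ i : Fin 3, X i * p ∈ I := by
  rw [Submodule.mem_colon]
  constructor
  · intro h i
    have := h (X i) (by rw [mIdeal]; exact Ideal.subset_span ⟨i, rfl⟩)
    rwa [smul_eq_mul, mul_comm] at this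
  · intro h q hq
    rw [mIdeal] at hq
    refine Submodule.span_induction (fun x hx => ?_) ?_ (fun x y _ _ hx hy => ?_)
      (fun r x _ hx => ?_) hq
    · obtain ⟨i, rfl⟩ := hx
      rw [smul_eq_mul, mul_comm]; exact h i
    · simpa using I.zero_mem
    · rw [smul_add]; exact I.add_mem hx hy
    · rw [smul_comm]; exact I.smul_mem r hx

lemma degree_add_single (s : Fin 3 →₀ ℕ) (i : Fin 3) (n : ℕ) :
    (s + Finsupp.single i n).degree = s.degree + n := by
  rw [degree_eq3, degree_eq3]
  fin_cases i <;> simp [Finsupp.single_apply] <;> ring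

lemma pow_le_span {k : Type*} [Field k] :
    ∀ n : ℕ, (mIdeal k) ^ n ≤
      Ideal.span ((fun s => monomial s (1:k)) '' {s : Fin 3 →₀ ℕ | n ≤ s.degree}) := by
  intro n
  induction n with
  | zero =>
    rw [pow_zero, Ideal.one_eq_top]
    intro p _
    have h1 : (1 : MvPolynomial (Fin 3) k) ∈
        Ideal.span ((fun s => monomial s (1:k)) '' {s : Fin 3 →₀ ℕ | 0 ≤ s.degree}) :=
      Ideal.subset_span ⟨0, by simp, by simp⟩
    simpa using Ideal.mul_mem_left _ p h1
  | succ n ih =>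
    rw [pow_succ]
    refine le_trans (Ideal.mul_mono ih le_rfl) ?_
    rw [mIdeal, Ideal.span_mul_span', Ideal.span_le]
    rintro q hq
    rw [Set.mem_mul] at hq
    obtain ⟨q1, hq1, q2, hq2, rfl⟩ := hq
    obtain ⟨u, hu, rfl⟩ := hq1
    obtain ⟨i, rfl⟩ := hq2
    apply Ideal.subset_span
    refine ⟨u + Finsupp.single i 1, ?_, ?_⟩
    · rw [Set.mem_setOf_eq, degree_add_single]
      exact Nat.add_le_add hu le_rfl
    · show monomial (u + Finsupp.single i 1) (1:k) = monomial u 1 * X i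
      rw [X_eq_mono, monomial_mul, mul_one]

lemma my_lt_mul {d d' : ℕ} (hd : 2 ≤ d) (hd' : 1 ≤ d') : d' < d * d' :=
  calc d' = 1 * d' := (one_mul d').symm
    _ < 2 * d' := by omega
    _ ≤ d * d' := Nat.mul_le_mul_right d' hd

lemma my_two_lt_mul {j d' : ℕ} (hd' : 1 ≤ d') : 2 * d' < (j + 3) * d' :=
  calc 2 * d' < 3 * d' := by omega
    _ ≤ (j + 3) * d' := Nat.mul_le_mul_right d' (by omega)

lemma sub1_inj {x y : ℕ} (hx : 1 ≤ x) (hy : 1 ≤ y) (h : x - 1 = y - 1) : x = y := by omega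

/-- For the ideal `I'` obtained from `(z(x,y)^{d−1}, x²(x,y)^{d−2}, y^d, z^d)` by the
reparametrization `x ↦ x^{d'}, y ↦ y^{d'}, z ↦ z^{d'}` (`d ≥ 2`, `d' ≥ 2`): `I'` is
`𝔪`-primary and
`dim_k Soc(R/I')_t = (d−2)·[t=dd'+2d'−3] + [t=dd'+3d'−3] + (d−1)·[t=2dd'−3]`. -/
theorem stmt2 {k : Type*} [Field k] (d d' : ℕ) (hd : 2 ≤ d) (hd' : 2 ≤ d')
    (I' : Ideal (MvPolynomial (Fin 3) k))
    (hI' : I' = Ideal.span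
      ({p | ∃ i ≤ d - 1, p = X 2 ^ d' * X 0 ^ (i * d') * X 1 ^ ((d - 1 - i) * d')} ∪
       {p | ∃ j ≤ d - 2, p = X 0 ^ ((2 + j) * d') * X 1 ^ ((d - 2 - j) * d')} ∪
       {X 1 ^ (d * d'), X 2 ^ (d * d')})) :
    (∃ N : ℕ, 1 ≤ N ∧ (mIdeal k) ^ N ≤ I')
    ∧ (∀ t : ℕ, socDimAt I' t =
        (d - 2) * (if t = d * d' + 2 * d' - 3 then 1 else 0)
          + (if t = d * d' + 3 * d' - 3 then 1 else 0)
          + (d - 1) * (if t = 2 * d * d' - 3 then 1 else 0)) := by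
  classical
  have hd'0 : 0 < d' := by omega
  have hdd' : 1 ≤ d * d' := Nat.one_le_iff_ne_zero.mpr (Nat.mul_ne_zero (by omega) (by omega))
  have hIeq : I' = Ideal.span ((fun s => monomial s (1:k)) '' Sgen d d') := by
    rw [hI', genset_eq]
  have memI : ∀ p : MvPolynomial (Fin 3) k, p ∈ I' ↔ ∀ s ∈ p.support, Stair d d' s := by
    intro p
    rw [hIeq, mem_ideal_span_monomial_image]
    exact Iff.rfl
  have hmono_mem : ∀ (s : Fin 3 →₀ ℕ) (c : k), Stair d d' s → monomial s c ∈ I' := by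
    intro s c h
    rw [memI]
    intro u hu
    by_cases hc : c = 0
    · simp [hc] at hu
    · rw [support_monomial, if_neg hc, Finset.mem_singleton] at hu
      subst hu; exact h
  constructor
  · refine ⟨3 * (d * d'), by omega, ?_⟩
    refine le_trans (pow_le_span _) ?_
    rw [Ideal.span_le]
    rintro q ⟨s, hs, rfl⟩
    rw [Set.mem_setOf_eq] at hs
    rw [SetLike.mem_coe]
    apply hmono_mem
    rw [degree_eq3] at hs
    rcases (show d*d' ≤ s 0 ∨ d*d' ≤ s 1 ∨ d*d' ≤ s 2 by omega) with h | h | h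
    · refine ⟨mexp ((2 + (d-2)) * d') ((d - 2 - (d-2)) * d') 0,
        Or.inl (Or.inr ⟨d-2, le_refl _, rfl⟩), ?_⟩
      rw [mexp_le_iff, show (2 + (d-2)) = d by omega, Nat.sub_self, zero_mul]
      exact ⟨h, Nat.zero_le _, Nat.zero_le _⟩
    · exact ⟨mexp 0 (d * d') 0, Or.inr (Set.mem_insert _ _),
        (mexp_le_iff _ _ _ _).mpr ⟨Nat.zero_le _, h, Nat.zero_le _⟩⟩
    · exact ⟨mexp 0 0 (d * d'), Or.inr (Set.mem_insert_iff.mpr (Or.inr rfl)),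
        (mexp_le_iff _ _ _ _).mpr ⟨Nat.zero_le _, Nat.zero_le _, h⟩⟩
  · intro t
    set Φ : (Fin 3 →₀ ℕ) → MvPolynomial (Fin 3) k ⧸ I' :=
      fun s => Ideal.Quotient.mk I' (monomial s 1) with hΦ
    set Bt : Finset (Fin 3 →₀ ℕ) := (SocF d d').filter (fun s => s.degree = t) with hBt
    -- image of the relevant submodule is the span of socle monomials
    have himg : Submodule.map (Ideal.Quotient.mkₐ k I').toLinearMap
        ((Submodule.colon I' (mIdeal k)).restrictScalars k ⊓ homogeneousSubmodule (Fin 3) k t)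
        = Submodule.span k (Φ '' ↑Bt) := by
      apply le_antisymm
      · rintro x hx
        rw [Submodule.mem_map] at hx
        obtain ⟨p, hp, rfl⟩ := hx
        rw [Submodule.mem_inf] at hp
        obtain ⟨hp1, hp2⟩ := hp
        rw [Submodule.restrictScalars_mem, mem_colon_iff] at hp1
        rw [mem_homogeneousSubmodule] at hp2
        have hrep : (Ideal.Quotient.mkₐ k I').toLinearMap p
            = ∑ s ∈ p.support, coeff s p • Φ s := by
          conv_lhs => rw [← support_sum_monomial_coeff p]
          rw [map_sum]
          refine Finset.sum_congr rfl fun s _ => ?_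
          show Ideal.Quotient.mk I' (monomial s (coeff s p)) = coeff s p • Φ s
          rw [hΦ]
          rw [show (monomial s (coeff s p) : MvPolynomial (Fin 3) k)
              = coeff s p • monomial s 1 by rw [smul_monomial, smul_eq_mul, mul_one]]
          exact map_smul (Ideal.Quotient.mkₐ k I').toLinearMap _ _
        rw [hrep]
        apply Submodule.sum_mem
        intro s hs
        by_cases hstair : Stair d d' s
        · have hz : Φ s = 0 := by
            rw [hΦ]
            exact Ideal.Quotient.eq_zero_iff_mem.mpr (hmono_mem s 1 hstair)
          rw [hz, smul_zero]
          exact Submodule.zero_mem _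
        · apply Submodule.smul_mem
          apply Submodule.subset_span
          refine ⟨s, ?_, rfl⟩
          rw [hBt, Finset.mem_coe, Finset.mem_filter]
          constructor
          · rw [← socP_iff hd hd']
            refine ⟨hstair, fun i => ?_⟩
            have hsupp : (Finsupp.single i 1 + s) ∈ (X i * p).support := by
              rw [mem_support_iff, coeff_X_mul]
              exact mem_support_iff.mp hs
            have := (memI _).mp (hp1 i) _ hsupp
            rwa [add_comm] at this
          · have := hp2 (mem_support_iff.mp hs)
            rwa [Finsupp.degree_eq_weight_one, ← Pi.one_def]
      · rw [Submodule.span_le]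
        rintro x ⟨s, hsB, rfl⟩
        rw [Finset.mem_coe, hBt, Finset.mem_filter] at hsB
        obtain ⟨hsoc, hdeg⟩ := hsB
        have hsocP := (socP_iff hd hd' s).mpr hsoc
        rw [SetLike.mem_coe, Submodule.mem_map]
        refine ⟨monomial s 1, ?_, rfl⟩
        rw [Submodule.mem_inf]
        constructor
        · rw [Submodule.restrictScalars_mem, mem_colon_iff]
          intro i
          rw [memI]
          intro u hu
          rw [show X i * monomial s (1:k) = monomial (Finsupp.single i 1 + s) 1 by
            rw [X_eq_mono, monomial_mul, one_mul]] at hu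
          rw [support_monomial, if_neg one_ne_zero, Finset.mem_singleton] at hu
          subst hu
          rw [add_comm]
          exact hsocP.2 i
        · rw [mem_homogeneousSubmodule]
          exact isHomogeneous_monomial _ hdeg
    -- linear independence of the socle monomials in the quotient
    have hli : LinearIndependent k
        (fun s : ↥(↑Bt : Set (Fin 3 →₀ ℕ)) => Φ (s : Fin 3 →₀ ℕ)) := by
      rw [Fintype.linearIndependent_iff]
      intro g hg i0
      set q : MvPolynomial (Fin 3) k :=
        ∑ i : ↥(↑Bt : Set (Fin 3 →₀ ℕ)), monomial (i : Fin 3 →₀ ℕ) (g i) with hq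
      have hmkq : Ideal.Quotient.mk I' q = 0 := by
        show (Ideal.Quotient.mkₐ k I').toLinearMap q = 0
        rw [hq, map_sum, ← hg]
        refine Finset.sum_congr rfl fun i _ => ?_
        rw [hΦ]
        rw [show (monomial (i : Fin 3 →₀ ℕ) (g i) : MvPolynomial (Fin 3) k)
            = g i • monomial (i : Fin 3 →₀ ℕ) 1 by rw [smul_monomial, smul_eq_mul, mul_one]]
        exact map_smul (Ideal.Quotient.mkₐ k I').toLinearMap _ _
      have hqI : q ∈ I' := Ideal.Quotient.eq_zero_iff_mem.mp hmkq
      have hcoeff : coeff (i0 : Fin 3 →₀ ℕ) q = g i0 := by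
        rw [hq, coeff_sum]
        have hz : ∀ i : ↥(↑Bt : Set (Fin 3 →₀ ℕ)), i ∈ Finset.univ → i ≠ i0 →
            coeff (i0 : Fin 3 →₀ ℕ) (monomial (i : Fin 3 →₀ ℕ) (g i)) = 0 := by
          intro i _ hne
          rw [coeff_monomial, if_neg (fun hc => hne (Subtype.ext hc))]
        rw [Finset.sum_eq_single_of_mem i0 (Finset.mem_univ _) hz, coeff_monomial, if_pos rfl]
      by_contra hne
      have hmem : (i0 : Fin 3 →₀ ℕ) ∈ q.support :=
        mem_support_iff.mpr (by rw [hcoeff]; exact hne)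
      have hst := (memI q).mp hqI _ hmem
      have hi0 : (i0 : Fin 3 →₀ ℕ) ∈ (SocF d d').filter (fun s => s.degree = t) := i0.2
      rw [Finset.mem_filter] at hi0
      exact ((socP_iff hd hd' _).mpr hi0.1).1 hst
    -- dimension = cardinality
    have hdim : socDimAt I' t = Bt.card := by
      rw [socDimAt, himg, Set.image_eq_range, finrank_span_eq_card hli]
      simp
    rw [hdim]
    -- cardinality computation
    have hcard1 : ∀ s ∈ (Finset.range (d-1)).image
        (fun a => mexp ((a+1)*d'-1) ((d-1-a)*d'-1) (d*d'-1)), s.degree = 2*d*d'-3 := by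
      intro s hs
      obtain ⟨a, ha, rfl⟩ := Finset.mem_image.mp hs
      rw [Finset.mem_range] at ha
      rw [mexp_degree]
      have hsum : (a+1)*d' + (d-1-a)*d' + d*d' = 2*d*d' := by
        rw [← Nat.add_mul, ← Nat.add_mul, show (a+1) + (d-1-a) + d = 2*d by omega]
      have e1 : 1 ≤ (a+1)*d' := Nat.one_le_iff_ne_zero.mpr (Nat.mul_ne_zero (by omega) (by omega))
      have e2 : 1 ≤ (d-1-a)*d' := Nat.one_le_iff_ne_zero.mpr (Nat.mul_ne_zero (by omega) (by omega))
      have e3 := hdd'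
      obtain ⟨x, hx⟩ : ∃ x, (a+1)*d' = x := ⟨_, rfl⟩
      obtain ⟨y, hy⟩ : ∃ y, (d-1-a)*d' = y := ⟨_, rfl⟩
      obtain ⟨z, hz⟩ : ∃ z, d*d' = z := ⟨_, rfl⟩
      obtain ⟨w, hw⟩ : ∃ w, 2*d*d' = w := ⟨_, rfl⟩
      rw [hx, hy, hz, hw]
      rw [hx, hy, hz, hw] at hsum
      rw [hx] at e1
      rw [hy] at e2
      rw [hz] at e3
      omega
    have hcard2 : (mexp (2*d'-1) (d*d'-1) (d'-1)).degree = d*d'+3*d'-3 := by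
      rw [mexp_degree]
      have e3 := hdd'
      obtain ⟨z, hz⟩ : ∃ z, d*d' = z := ⟨_, rfl⟩
      rw [hz]
      rw [hz] at e3
      omega
    have hcard3 : ∀ s ∈ (Finset.range (d-2)).image
        (fun j => mexp ((j+3)*d'-1) ((d-2-j)*d'-1) (d'-1)), s.degree = d*d'+2*d'-3 := by
      intro s hs
      obtain ⟨j, hj, rfl⟩ := Finset.mem_image.mp hs
      rw [Finset.mem_range] at hj
      rw [mexp_degree]
      have hsum : (j+3)*d' + (d-2-j)*d' = d*d' + d' := by
        rw [← Nat.add_mul, show (j+3) + (d-2-j) = d + 1 by omega, Nat.add_mul, one_mul]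
      have e1 : 1 ≤ (j+3)*d' := Nat.one_le_iff_ne_zero.mpr (Nat.mul_ne_zero (by omega) (by omega))
      have e2 : 1 ≤ (d-2-j)*d' := Nat.one_le_iff_ne_zero.mpr (Nat.mul_ne_zero (by omega) (by omega))
      have e3 := hdd'
      obtain ⟨x, hx⟩ : ∃ x, (j+3)*d' = x := ⟨_, rfl⟩
      obtain ⟨y, hy⟩ : ∃ y, (d-2-j)*d' = y := ⟨_, rfl⟩
      obtain ⟨z, hz⟩ : ∃ z, d*d' = z := ⟨_, rfl⟩
      rw [hx, hy, hz]
      rw [hx, hy, hz] at hsum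
      rw [hx] at e1
      rw [hy] at e2
      rw [hz] at e3
      omega
    have posm : ∀ x y : ℕ, x ≠ 0 → 0 < d' → 1 ≤ x * d' :=
      fun x y hx h => Nat.one_le_iff_ne_zero.mpr (Nat.mul_ne_zero hx (by omega))
    -- cardinalities of the filtered families
    have cF1 : ((((Finset.range (d-1)).image
        (fun a => mexp ((a+1)*d'-1) ((d-1-a)*d'-1) (d*d'-1)))).filter
        (fun s => s.degree = t)).card = if t = 2*d*d'-3 then d-1 else 0 := by
      split_ifs with h
      · rw [Finset.filter_true_of_mem (fun s hs => (hcard1 s hs).trans h.symm)]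
        rw [Finset.card_image_of_injOn ?_, Finset.card_range]
        intro a ha b hb heq
        have h1 := (mexp_inj heq).1
        have h2 : (a+1)*d' = (b+1)*d' :=
          sub1_inj (posm _ 0 (by omega) hd'0) (posm _ 0 (by omega) hd'0) h1
        have := Nat.eq_of_mul_eq_mul_right hd'0 h2
        omega
      · rw [Finset.filter_false_of_mem (fun s hs hdeg => h (hdeg.symm.trans (hcard1 s hs)))]
        exact Finset.card_empty
    have cF2 : (({mexp (2*d'-1) (d*d'-1) (d'-1)} : Finset (Fin 3 →₀ ℕ)).filter
        (fun s => s.degree = t)).card = if t = d*d'+3*d'-3 then 1 else 0 := by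
      rw [Finset.filter_singleton]
      by_cases h : t = d*d'+3*d'-3
      · rw [if_pos (by rw [hcard2, h]), if_pos h, Finset.card_singleton]
      · rw [if_neg (fun hc => h (hc.symm.trans hcard2)), if_neg h]
        exact Finset.card_empty
    have cF3 : ((((Finset.range (d-2)).image
        (fun j => mexp ((j+3)*d'-1) ((d-2-j)*d'-1) (d'-1)))).filter
        (fun s => s.degree = t)).card = if t = d*d'+2*d'-3 then d-2 else 0 := by
      split_ifs with h
      · rw [Finset.filter_true_of_mem (fun s hs => (hcard3 s hs).trans h.symm)]
        rw [Finset.card_image_of_injOn ?_, Finset.card_range]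
        intro a ha b hb heq
        have h1 := (mexp_inj heq).1
        have h2 : (a+3)*d' = (b+3)*d' := by
          have e1 : 1 ≤ (a+3)*d' := posm _ 0 (by omega) hd'0
          have e2 : 1 ≤ (b+3)*d' := posm _ 0 (by omega) hd'0
          exact sub1_inj e1 e2 h1
        have := Nat.eq_of_mul_eq_mul_right hd'0 h2
        omega
      · rw [Finset.filter_false_of_mem (fun s hs hdeg => h (hdeg.symm.trans (hcard3 s hs)))]
        exact Finset.card_empty
    -- disjointness
    have hdisj1 : Disjoint
        (((Finset.range (d-1)).image
          (fun a => mexp ((a+1)*d'-1) ((d-1-a)*d'-1) (d*d'-1))).filter (fun s => s.degree = t))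
        (({mexp (2*d'-1) (d*d'-1) (d'-1)} : Finset (Fin 3 →₀ ℕ)).filter
          (fun s => s.degree = t)) := by
      rw [Finset.disjoint_left]
      intro a ha hb
      rw [Finset.mem_filter] at ha hb
      obtain ⟨x, hx, rfl⟩ := Finset.mem_image.mp ha.1
      rw [Finset.mem_singleton] at hb
      have h2 := (mexp_inj hb.1).2.2
      have hlt := my_lt_mul hd (by omega : 1 ≤ d')
      omega
    have hdisj2 : Disjoint
        ((((Finset.range (d-1)).image
            (fun a => mexp ((a+1)*d'-1) ((d-1-a)*d'-1) (d*d'-1))).filter (fun s => s.degree = t))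
          ∪ (({mexp (2*d'-1) (d*d'-1) (d'-1)} : Finset (Fin 3 →₀ ℕ)).filter
            (fun s => s.degree = t)))
        ((((Finset.range (d-2)).image
          (fun j => mexp ((j+3)*d'-1) ((d-2-j)*d'-1) (d'-1)))).filter
          (fun s => s.degree = t)) := by
      rw [Finset.disjoint_left]
      intro a ha hb
      rw [Finset.mem_filter] at hb
      obtain ⟨y, hy, rfl⟩ := Finset.mem_image.mp hb.1
      rcases Finset.mem_union.mp ha with ha' | ha'
      · rw [Finset.mem_filter] at ha'
        obtain ⟨x, hx, hxe⟩ := Finset.mem_image.mp ha'.1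
        have h2 := (mexp_inj hxe).2.2
        have hlt := my_lt_mul hd (by omega : 1 ≤ d')
        omega
      · rw [Finset.mem_filter, Finset.mem_singleton] at ha'
        have h0 := (mexp_inj ha'.1).1
        have hlt := my_two_lt_mul (j := y) (by omega : 1 ≤ d')
        omega
    have hc : Bt.card = (if t = 2*d*d'-3 then d-1 else 0) + (if t = d*d'+3*d'-3 then 1 else 0)
        + (if t = d*d'+2*d'-3 then d-2 else 0) := by
      rw [hBt]
      show ((SocF d d').filter (fun s => s.degree = t)).card = _
      unfold SocF
      rw [Finset.filter_union, Finset.filter_union,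
        Finset.card_union_of_disjoint hdisj2, Finset.card_union_of_disjoint hdisj1,
        cF1, cF2, cF3]
    rw [hc]
    split_ifs <;> omega
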